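/- arXiv:2110.01321 — 4 statements merged into one kernel-verified Lean document; each statement's English description precedes it below -/
import Mathlib

section
/- For all a with 0 < a ≤ 1/2 and all x with 0 < x ≤ 1, the incomplete Beta function satisfies a·B_x(a, 1−a) ≥ (1/x − 1)^(1/2 − a) · arcsin(√x). -/
open Real MeasureTheory

/-- The incomplete Beta function `B_x(a,b) = ∫_0^x t^(a-1) (1-t)^(b-1) dt`. -/
noncomputable def incBeta (a b x : ℝ) : ℝ :=
  ∫ t in (0:ℝ)..x, t ^ (a - 1) * (1 - t) ^ (b - 1)

open intervalIntegral Filter Set Topology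

private lemma aux_int {a : ℝ} (ha : 0 < a) (ha1 : a < 1) :
    IntervalIntegrable (fun t : ℝ => t ^ (a-1) * (1-t) ^ (-a)) volume 0 1 := by
  have hm : AEStronglyMeasurable (fun t : ℝ => t ^ (a-1) * (1-t) ^ (-a)) volume :=
    (by fun_prop : Measurable (fun t : ℝ => t ^ (a-1) * (1-t) ^ (-a))).aestronglyMeasurable
  have h1 : IntervalIntegrable (fun t : ℝ => t ^ (a-1) * (1-t) ^ (-a)) volume 0 (1/2) := by
    refine IntervalIntegrable.mono_fun
      ((intervalIntegrable_rpow' (r := a-1) (by linarith) (a := 0) (b := 1/2)).const_mul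
        ((2:ℝ)^a)) hm.restrict ?_
    filter_upwards [ae_restrict_mem measurableSet_uIoc] with t ht
    rw [uIoc_of_le (by norm_num)] at ht
    obtain ⟨ht0, ht1⟩ := ht
    have h1t : (0:ℝ) < 1 - t := by linarith
    rw [Real.norm_eq_abs, Real.norm_eq_abs, abs_of_nonneg (by positivity),
      abs_of_nonneg (by positivity), mul_comm ((2:ℝ)^a)]
    have : (1-t) ^ (-a) ≤ (2:ℝ)^a := by
      have h2 : ((2:ℝ)⁻¹) ^ (-a) = (2:ℝ)^a := by
        rw [← Real.rpow_neg_one, ← Real.rpow_mul (by norm_num)]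
        norm_num
      rw [← h2]
      exact Real.rpow_le_rpow_of_nonpos (by norm_num) (by linarith) (by linarith)
    exact mul_le_mul_of_nonneg_left this (Real.rpow_nonneg ht0.le _)
  have h2 : IntervalIntegrable (fun t : ℝ => t ^ (a-1) * (1-t) ^ (-a)) volume (1/2) 1 := by
    have base : IntervalIntegrable (fun t : ℝ => (1-t) ^ (-a)) volume (1/2) 1 := by
      have h := (intervalIntegrable_rpow' (r := -a) (by linarith : (-1:ℝ) < -a) (a := 0)
        (b := 1/2)).comp_sub_left 1
      have h' := h.symm
      norm_num at h'
      convert h' using 2 <;> norm_num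
    refine IntervalIntegrable.mono_fun (base.const_mul ((2:ℝ)^(1-a))) hm.restrict ?_
    filter_upwards [ae_restrict_mem measurableSet_uIoc] with t ht
    rw [uIoc_of_le (by norm_num)] at ht
    obtain ⟨ht0, ht1⟩ := ht
    have h1t : (0:ℝ) ≤ 1 - t := by linarith
    have htp : (0:ℝ) < t := by linarith
    rw [Real.norm_eq_abs, Real.norm_eq_abs, abs_of_nonneg (by positivity),
      abs_of_nonneg (by positivity)]
    have : t ^ (a-1) ≤ (2:ℝ)^(1-a) := by
      have h2 : ((2:ℝ)⁻¹) ^ (a-1) = (2:ℝ)^(1-a) := by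
        rw [← Real.rpow_neg_one, ← Real.rpow_mul (by norm_num)]
        ring_nf
      rw [← h2]
      exact Real.rpow_le_rpow_of_nonpos (by norm_num) (by linarith) (by linarith)
    calc t ^ (a-1) * (1-t)^(-a) ≤ (2:ℝ)^(1-a) * (1-t)^(-a) :=
          mul_le_mul_of_nonneg_right this (Real.rpow_nonneg h1t _)
      _ = _ := by ring
  exact h1.trans h2

private lemma aux_int' {a x : ℝ} (ha : 0 < a) (ha1 : a < 1) (h0 : 0 ≤ x) (h1 : x ≤ 1) :
    IntervalIntegrable (fun t : ℝ => t ^ (a-1) * (1-t) ^ (-a)) volume 0 x :=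
  (aux_int ha ha1).mono_set
    (by rw [uIcc_of_le h0, uIcc_of_le zero_le_one]; exact Icc_subset_Icc le_rfl h1)

private lemma arcsin_ge_self {t : ℝ} (h0 : 0 ≤ t) (h1 : t ≤ 1) : t ≤ arcsin t := by
  rcases eq_or_lt_of_le h0 with h | h
  · simp [← h]
  · have := Real.sin_lt (Real.arcsin_pos.2 h)
    rw [Real.sin_arcsin (by linarith) h1] at this
    exact this.le

private lemma arcsin_le_lin {t : ℝ} (h0 : 0 ≤ t) (h1 : t ≤ 1) : arcsin t ≤ π/2 * t := by
  have h := Real.mul_le_sin (x := arcsin t) (Real.arcsin_nonneg.2 h0)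
    (Real.arcsin_le_pi_div_two t)
  rw [Real.sin_arcsin (by linarith) h1] at h
  have hπ : (0:ℝ) < π := Real.pi_pos
  rw [div_mul_eq_mul_div, div_le_iff₀ hπ] at h
  linarith [h]

private lemma deriv_key {a x : ℝ} (ha' : a ≤ 1/2) (hx : 0 < x) (hx1 : x < 1) :
    0 ≤ a * (x^(a-1) * (1-x)^(-a)) -
      ((-(x^2)⁻¹ * (1/2-a) * (x⁻¹-1)^((1/2-a)-1)) * arcsin (√x)
        + (x⁻¹-1)^(1/2-a) * (1/√(1-(√x)^2) * (1/(2*√x)))) := by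
  have hx1' : (0:ℝ) < 1 - x := by linarith
  rw [Real.sq_sqrt hx.le]
  have hux : x⁻¹ - 1 = (1-x) * x⁻¹ := by field_simp
  have hu : 0 < x⁻¹ - 1 := by rw [hux]; positivity
  have E0 : ∀ r : ℝ, (x⁻¹-1)^r = (1-x)^r * (x^r)⁻¹ := fun r => by
    rw [hux, Real.mul_rpow hx1'.le (inv_nonneg.2 hx.le), Real.inv_rpow hx.le]
  have r1 : x ^ (a-1) = x ^ a / x := by rw [Real.rpow_sub hx, Real.rpow_one]
  have r2 : (1-x) ^ (-a) = ((1-x)^a)⁻¹ := by rw [Real.rpow_neg hx1'.le]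
  have r3 : (x⁻¹-1)^(1/2-a)
      = ((1-x)^((1:ℝ)/2) / (1-x)^a) * (x^a / x^((1:ℝ)/2)) := by
    rw [E0, Real.rpow_sub hx1', Real.rpow_sub hx, inv_div]
  have r4 : (x⁻¹-1)^((1/2-a)-1) = (x⁻¹-1)^(1/2-a) / (x⁻¹ - 1) := by
    rw [Real.rpow_sub hu, Real.rpow_one]
  rw [r1, r2, r4, r3, hux, Real.sqrt_eq_rpow, Real.sqrt_eq_rpow]
  have hA : x^((1:ℝ)/2) * (1-x)^((1:ℝ)/2) ≤ arcsin (x ^ ((1:ℝ)/2)) := by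
    have h1 : x ^ ((1:ℝ)/2) ≤ 1 := Real.rpow_le_one hx.le hx1.le (by norm_num)
    have h2 : (1-x) ^ ((1:ℝ)/2) ≤ 1 := Real.rpow_le_one hx1'.le (by linarith) (by norm_num)
    have h3 : (0:ℝ) ≤ x ^ ((1:ℝ)/2) := Real.rpow_nonneg hx.le _
    calc x^((1:ℝ)/2) * (1-x)^((1:ℝ)/2) ≤ x^((1:ℝ)/2) * 1 :=
          mul_le_mul_of_nonneg_left h2 h3
      _ = x^((1:ℝ)/2) := mul_one _
      _ ≤ arcsin (x ^ ((1:ℝ)/2)) := arcsin_ge_self h3 h1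
  have hX2 : (x^((1:ℝ)/2))^2 = x := by
    rw [← Real.rpow_natCast (x ^ ((1:ℝ)/2)) 2, ← Real.rpow_mul hx.le]; norm_num
  have hY2 : ((1-x)^((1:ℝ)/2))^2 = 1-x := by
    rw [← Real.rpow_natCast ((1-x) ^ ((1:ℝ)/2)) 2, ← Real.rpow_mul hx1'.le]; norm_num
  set A := arcsin (x ^ ((1:ℝ)/2)) with hAdef
  set X := x ^ ((1:ℝ)/2) with hXdef
  set Y := (1-x) ^ ((1:ℝ)/2) with hYdef
  set U := x ^ a with hUdef
  set V := (1-x) ^ a with hVdef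
  have hXpos : 0 < X := Real.rpow_pos_of_pos hx _
  have hYpos : 0 < Y := Real.rpow_pos_of_pos hx1' _
  have hUpos : 0 < U := Real.rpow_pos_of_pos hx _
  have hVpos : 0 < V := Real.rpow_pos_of_pos hx1' _
  rw [← hY2, ← hX2]
  have key : a * (U / X^2 / V) -
      ((-((X^2)^2)⁻¹ * (1/2-a) * ((Y/V * (U/X)) / (Y^2 * (X^2)⁻¹))) * A
        + (Y/V * (U/X)) * (1/Y * (1/(2*X))))
      = (1/2-a) * U * (A - X*Y) / (X^3 * V * Y) := by
    field_simp
    ring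
  calc (0:ℝ) ≤ (1/2-a) * U * (A - X*Y) / (X^3 * V * Y) := by
        apply div_nonneg
        · apply mul_nonneg (mul_nonneg (by linarith) hUpos.le)
          linarith [hA]
        · positivity
    _ = _ := by rw [← key]; ring_nf

private lemma hasDeriv_F {a x : ℝ} (ha : 0 < a) (ha1 : a < 1) (hx : 0 < x) (hx1 : x < 1) :
    HasDerivAt (fun y : ℝ => a * (∫ t in (0:ℝ)..y, t ^ (a-1) * (1-t) ^ (-a))
        - (y⁻¹-1)^(1/2-a) * arcsin (√y))
      (a * (x^(a-1) * (1-x)^(-a)) -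
        ((-(x^2)⁻¹ * (1/2-a) * (x⁻¹-1)^((1/2-a)-1)) * arcsin (√x)
          + (x⁻¹-1)^(1/2-a) * (1/√(1-(√x)^2) * (1/(2*√x))))) x := by
  have hx1' : (0:ℝ) < 1 - x := by linarith
  have hu : 0 < x⁻¹ - 1 := by
    have h : x⁻¹ - 1 = (1-x) * x⁻¹ := by field_simp
    rw [h]; positivity
  have h1 : HasDerivAt (fun y : ℝ => ∫ t in (0:ℝ)..y, t ^ (a-1) * (1-t) ^ (-a))
      (x^(a-1) * (1-x)^(-a)) x := by
    refine intervalIntegral.integral_hasDerivAt_right (aux_int' ha ha1 hx.le hx1.le) ?_ ?_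
    · exact ⟨Set.univ, Filter.univ_mem,
        ((by fun_prop : Measurable (fun t : ℝ => t ^ (a-1) * (1-t) ^ (-a))).aestronglyMeasurable).restrict⟩
    · exact ((Real.continuousAt_rpow_const x _ (Or.inl hx.ne')).mul
        (((continuous_const.sub continuous_id).continuousAt).rpow_const
          (Or.inl (by simpa using hx1'.ne'))))
  have h2 : HasDerivAt (fun y : ℝ => (y⁻¹-1)^(1/2-a))
      (-(x^2)⁻¹ * (1/2-a) * (x⁻¹-1)^((1/2-a)-1)) x :=
    ((hasDerivAt_inv hx.ne').sub_const 1).rpow_const (Or.inl hu.ne')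
  have h3 : HasDerivAt (fun y : ℝ => arcsin (√y))
      (1/√(1-(√x)^2) * (1/(2*√x))) x := by
    have hs1 : √x ≠ -1 := by
      have := Real.sqrt_nonneg x; intro h; rw [h] at this; linarith
    have hs2 : √x ≠ 1 := by
      intro h
      have := Real.sq_sqrt hx.le
      rw [h] at this; simp at this; linarith
    exact (Real.hasDerivAt_arcsin hs1 hs2).comp x (Real.hasDerivAt_sqrt hx.ne')
  exact (h1.const_mul a).sub (h2.mul h3)

private lemma main_lt {a x : ℝ} (ha : 0 < a) (ha' : a ≤ 1/2) (hx : 0 < x) (hx1 : x < 1) :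
    (x⁻¹-1)^(1/2-a) * arcsin (√x)
      ≤ a * ∫ t in (0:ℝ)..x, t ^ (a-1) * (1-t) ^ (-a) := by
  have ha1 : a < 1 := by linarith
  set F : ℝ → ℝ := fun y => a * (∫ t in (0:ℝ)..y, t ^ (a-1) * (1-t) ^ (-a))
      - (y⁻¹-1)^(1/2-a) * arcsin (√y) with hFdef
  have mono : MonotoneOn F (Ioo 0 1) := by
    have hd : ∀ y ∈ Ioo (0:ℝ) 1, HasDerivAt F
        (a * (y^(a-1) * (1-y)^(-a)) -
          ((-(y^2)⁻¹ * (1/2-a) * (y⁻¹-1)^((1/2-a)-1)) * arcsin (√y)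
            + (y⁻¹-1)^(1/2-a) * (1/√(1-(√y)^2) * (1/(2*√y))))) y :=
      fun y hy => hasDeriv_F ha ha1 hy.1 hy.2
    refine monotoneOn_of_deriv_nonneg (convex_Ioo 0 1) ?_ ?_ ?_
    · exact fun y hy => ((hd y hy).continuousAt).continuousWithinAt
    · rw [interior_Ioo]
      exact fun y hy => ((hd y hy).differentiableAt).differentiableWithinAt
    · rw [interior_Ioo]
      intro y hy
      rw [(hd y hy).deriv]
      exact deriv_key ha' hy.1 hy.2
  have t1 : Tendsto (fun y : ℝ => a * ∫ t in (0:ℝ)..y, t ^ (a-1) * (1-t) ^ (-a))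
      (𝓝[>] (0:ℝ)) (𝓝 0) := by
    have hc : ContinuousOn (fun y : ℝ => ∫ t in (0:ℝ)..y, t ^ (a-1) * (1-t) ^ (-a))
        (uIcc (0:ℝ) 1) :=
      intervalIntegral.continuousOn_primitive_interval' (aux_int ha ha1) left_mem_uIcc
    have h0 : (0:ℝ) ∈ uIcc (0:ℝ) 1 := left_mem_uIcc
    have hcw := (hc 0 h0)
    rw [ContinuousWithinAt, intervalIntegral.integral_same] at hcw
    have hle : 𝓝[>] (0:ℝ) ≤ 𝓝[uIcc (0:ℝ) 1] 0 := by
      apply nhdsWithin_le_of_mem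
      refine Filter.mem_of_superset
        (Ioo_mem_nhdsGT_of_mem (c := (0:ℝ)) (a := 1) ⟨le_rfl, zero_lt_one⟩) ?_
      rw [uIcc_of_le zero_le_one]; exact Ioo_subset_Icc_self
    have := (hcw.mono_left hle).const_mul a
    simpa using this
  have t2 : Tendsto (fun y : ℝ => (y⁻¹-1)^(1/2-a) * arcsin (√y)) (𝓝[>] (0:ℝ)) (𝓝 0) := by
    have hb : Tendsto (fun y : ℝ => π/2 * y ^ a) (𝓝[>] (0:ℝ)) (𝓝 0) := by
      have h := (Real.continuousAt_rpow_const 0 a (Or.inr ha.le)).tendsto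
      rw [Real.zero_rpow ha.ne'] at h
      have h2 := (h.mono_left (nhdsWithin_le_nhds (s := Set.Ioi (0:ℝ)))).const_mul (π/2)
      simpa using h2
    refine tendsto_of_tendsto_of_tendsto_of_le_of_le' tendsto_const_nhds hb ?_ ?_
    · filter_upwards [Ioo_mem_nhdsGT_of_mem (c := (0:ℝ)) (a := 1)
        (Set.mem_Ico.2 ⟨le_rfl, zero_lt_one⟩)] with y hy
      have hinv : (0:ℝ) ≤ y⁻¹ - 1 := by
        have : (1:ℝ) ≤ y⁻¹ := (one_le_inv₀ hy.1).2 hy.2.le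
        linarith
      exact mul_nonneg (Real.rpow_nonneg hinv _)
        (Real.arcsin_nonneg.2 (Real.sqrt_nonneg y))
    · filter_upwards [Ioo_mem_nhdsGT_of_mem (c := (0:ℝ)) (a := 1)
        (Set.mem_Ico.2 ⟨le_rfl, zero_lt_one⟩)] with y hy
      obtain ⟨hy0, hy1⟩ := hy
      have hinv : (0:ℝ) ≤ y⁻¹ - 1 := by
        have : (1:ℝ) ≤ y⁻¹ := (one_le_inv₀ hy0).2 hy1.le
        linarith
      have b1 : (y⁻¹-1)^(1/2-a) ≤ (y⁻¹)^(1/2-a) :=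
        Real.rpow_le_rpow hinv (by linarith [inv_pos.2 hy0]) (by linarith)
      have b2 : arcsin (√y) ≤ π/2 * √y :=
        arcsin_le_lin (Real.sqrt_nonneg y) (by
          rw [show (1:ℝ) = √1 by simp]
          exact Real.sqrt_le_sqrt hy1.le)
      have b3 : (0:ℝ) ≤ arcsin (√y) := Real.arcsin_nonneg.2 (Real.sqrt_nonneg y)
      calc (y⁻¹-1)^(1/2-a) * arcsin (√y) ≤ (y⁻¹)^(1/2-a) * (π/2 * √y) :=
            mul_le_mul b1 b2 b3 (Real.rpow_nonneg (inv_nonneg.2 hy0.le) _)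
        _ = π/2 * (y ^ (-(1/2-a)) * y ^ ((1:ℝ)/2)) := by
            rw [Real.inv_rpow hy0.le, ← Real.rpow_neg hy0.le, Real.sqrt_eq_rpow]; ring
        _ = π/2 * y ^ a := by rw [← Real.rpow_add hy0, show -(1/2-a) + (1:ℝ)/2 = a by ring]
  have tF : Tendsto F (𝓝[>] (0:ℝ)) (𝓝 0) := by
    have h := t1.sub t2
    rw [sub_zero] at h
    exact h
  have h0F : 0 ≤ F x := by
    refine le_of_tendsto tF ?_
    filter_upwards [Ioo_mem_nhdsGT_of_mem (c := (0:ℝ)) (a := x)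
      (Set.mem_Ico.2 ⟨le_rfl, hx⟩)] with y hy
    exact mono ⟨hy.1, hy.2.trans hx1⟩ ⟨hx, hx1⟩ hy.2.le
  rw [hFdef] at h0F
  simp only [sub_nonneg] at h0F
  exact h0F

theorem incBeta_lower_bound (a x : ℝ) (ha : 0 < a) (ha' : a ≤ 1 / 2)
    (hx : 0 < x) (hx' : x ≤ 1) :
    a * incBeta a (1 - a) x ≥ (1 / x - 1) ^ ((1:ℝ) / 2 - a) * Real.arcsin (Real.sqrt x) := by
  have hint : incBeta a (1-a) x = ∫ t in (0:ℝ)..x, t ^ (a-1) * (1-t) ^ (-a) := by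
    unfold incBeta
    congr 1
    ext t
    rw [show (1:ℝ) - a - 1 = -a by ring]
  rw [ge_iff_le, hint, one_div]
  rcases lt_or_eq_of_le hx' with hx1 | hx1
  · exact main_lt ha ha' hx hx1
  · subst hx1
    rcases lt_or_eq_of_le ha' with ha2 | ha2
    · have hRHS : ((1:ℝ)⁻¹ - 1) ^ ((1:ℝ)/2 - a) * arcsin (√1) = 0 := by
        rw [show (1:ℝ)⁻¹ - 1 = 0 by norm_num, Real.zero_rpow (by linarith)]
        ring
      rw [hRHS]
      apply mul_nonneg ha.le
      apply intervalIntegral.integral_nonneg zero_le_one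
      intro u hu
      exact mul_nonneg (Real.rpow_nonneg hu.1 _) (Real.rpow_nonneg (by linarith [hu.2]) _)
    · subst ha2
      have hRHS : ((1:ℝ)⁻¹ - 1) ^ ((1:ℝ)/2 - 1/2) * arcsin (√1) = π/2 := by
        norm_num
      rw [hRHS]
      have hc : ContinuousOn (fun y : ℝ => ∫ t in (0:ℝ)..y, t ^ ((1:ℝ)/2-1) * (1-t) ^ (-(1/2:ℝ)))
          (uIcc (0:ℝ) 1) :=
        intervalIntegral.continuousOn_primitive_interval' (aux_int (by norm_num) (by norm_num))
          left_mem_uIcc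
      have h1m : (1:ℝ) ∈ uIcc (0:ℝ) 1 := right_mem_uIcc
      have hle : 𝓝[<] (1:ℝ) ≤ 𝓝[uIcc (0:ℝ) 1] 1 := by
        apply nhdsWithin_le_of_mem
        refine Filter.mem_of_superset
          (Ioo_mem_nhdsLT_of_mem (a := (0:ℝ)) (c := 1)
            (Set.mem_Ioc.2 ⟨zero_lt_one, le_rfl⟩)) ?_
        rw [uIcc_of_le zero_le_one]; exact Ioo_subset_Icc_self
      have T1 : Tendsto (fun y : ℝ => (1/2:ℝ) * ∫ t in (0:ℝ)..y, t ^ ((1:ℝ)/2-1) * (1-t) ^ (-(1/2:ℝ)))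
          (𝓝[<] (1:ℝ))
          (𝓝 ((1/2:ℝ) * ∫ t in (0:ℝ)..(1:ℝ), t ^ ((1:ℝ)/2-1) * (1-t) ^ (-(1/2:ℝ)))) :=
        ((hc 1 h1m).mono_left hle).const_mul _
      have T2 : Tendsto (fun y : ℝ => arcsin (√y)) (𝓝[<] (1:ℝ)) (𝓝 (π/2)) := by
        have h := (Real.continuous_arcsin.comp Real.continuous_sqrt).tendsto 1
        rw [Function.comp_apply, Real.sqrt_one, Real.arcsin_one] at h
        exact h.mono_left nhdsWithin_le_nhds
      have hev : ∀ᶠ y in 𝓝[<] (1:ℝ), arcsin (√y) ≤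
          (1/2:ℝ) * ∫ t in (0:ℝ)..y, t ^ ((1:ℝ)/2-1) * (1-t) ^ (-(1/2:ℝ)) := by
        filter_upwards [Ioo_mem_nhdsLT_of_mem (a := (0:ℝ)) (c := 1)
          (Set.mem_Ioc.2 ⟨zero_lt_one, le_rfl⟩)] with y hy
        have h := main_lt (a := 1/2) (by norm_num) le_rfl hy.1 hy.2
        have hinv : (0:ℝ) < y⁻¹ - 1 := by
          have h2 : (1:ℝ) < y⁻¹ := (one_lt_inv₀ hy.1).2 hy.2
          linarith
        rw [show (1:ℝ)/2 - 1/2 = 0 by norm_num, Real.rpow_zero, one_mul] at h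
        exact h
      exact le_of_tendsto_of_tendsto T2 T1 hev
end

section
/- Let A be a self-adjoint operator on a Hilbert space H that is bounded above, generating the semigroup e^{tA}. Let θ > 0, M > 0, and u₀ ∈ H with ‖u₀‖ ≤ M. Then the solution u(t) = e^{tA}u₀ of u' = Au, u(0) = u₀ satisfies ‖u(t)‖ ≤ M^{1 − t/θ} · ‖u(θ)‖^{t/θ} for all 0 ≤ t ≤ θ. -/
open Real MeasureTheory RealInnerProductSpace

/-- Logarithmic convexity for self-adjoint semigroups: if `A` is self-adjoint and bounded
above (quadratic form bounded above), then `t ↦ ‖e^{tA} u₀‖` is log-convex. -/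
theorem log_convexity_selfAdjoint {H : Type*} [NormedAddCommGroup H]
    [InnerProductSpace ℝ H] [CompleteSpace H]
    (A : H →L[ℝ] H) (hA : IsSelfAdjoint A)
    (c : ℝ) (hbdd : ∀ x : H, inner ℝ (A x) x ≤ c * ‖x‖ ^ 2)
    (θ M : ℝ) (hθ : 0 < θ) (hM : 0 < M) (u₀ : H) (hu₀ : ‖u₀‖ ≤ M)
    (u : ℝ → H) (hu : ∀ t, u t = NormedSpace.exp (t • A) u₀)
    (t : ℝ) (ht : 0 ≤ t) (ht' : t ≤ θ) :
    ‖u t‖ ≤ M ^ (1 - t / θ) * ‖u θ‖ ^ (t / θ) := by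
  set a : ℝ := 1 - t / θ with ha_def
  set b : ℝ := t / θ with hb_def
  have hb0 : 0 ≤ b := div_nonneg ht hθ.le
  have hb1 : b ≤ 1 := (div_le_one hθ).mpr ht'
  have ha0 : 0 ≤ a := by simp [ha_def]; linarith
  have hab : a + b = 1 := by ring
  rcases eq_or_ne u₀ 0 with h0 | h0
  · have : u t = 0 := by rw [hu, h0, map_zero]
    rw [this, norm_zero]
    positivity
  -- main case
  set v : ℝ → H := fun r => NormedSpace.exp (r • A) u₀ with hv
  have hv0 : v 0 = u₀ := by simp [hv, NormedSpace.exp_zero]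
  have hvne : ∀ s, v s ≠ 0 := by
    intro s h
    have hc : Commute (-(s • A)) (s • A) := (Commute.refl (s • A)).neg_left
    have h1 : NormedSpace.exp (-(s • A)) * NormedSpace.exp (s • A) = 1 := by
      letI : NormedAlgebra ℚ (H →L[ℝ] H) := NormedAlgebra.restrictScalars ℚ ℝ _
      rw [← NormedSpace.exp_add_of_commute hc]; simp
    apply h0
    have h2 : NormedSpace.exp (-(s • A)) (v s) = u₀ := by
      have := congrArg (fun T : H →L[ℝ] H => T u₀) h1
      simpa [ContinuousLinearMap.mul_apply, hv] using this
    rw [← h2, h, map_zero]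
  have hvpos : ∀ s, 0 < ‖v s‖ := fun s => norm_pos_iff.mpr (hvne s)
  have hd : ∀ s, HasDerivAt v (A (v s)) s := by
    intro s
    have h1 := hasDerivAt_exp_smul_const' (𝕂 := ℝ) A s
    have h2 := h1.clm_apply (hasDerivAt_const s u₀)
    simpa [ContinuousLinearMap.mul_apply, hv] using h2
  set g : ℝ → ℝ := fun s => (inner ℝ (v s) (v s) : ℝ) with hg_def
  have hgnorm' : ∀ s, g s = ‖v s‖ ^ 2 := fun s => real_inner_self_eq_norm_sq (v s)
  have hgpos : ∀ s, 0 < g s := fun s => by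
    rw [hgnorm' s]; exact pow_pos (norm_pos_iff.mpr (hvne s)) 2
  have hgnorm : ∀ s, g s = ‖v s‖ ^ 2 := fun s => real_inner_self_eq_norm_sq (v s)
  have hdg : ∀ s, HasDerivAt g (2 * inner ℝ (A (v s)) (v s)) s := by
    intro s
    have := (hd s).inner ℝ (hd s)
    have hcomm : (inner ℝ (v s) (A (v s)) : ℝ) + inner ℝ (A (v s)) (v s)
        = 2 * inner ℝ (A (v s)) (v s) := by
      rw [real_inner_comm]; ring
    rwa [hcomm] at this
  set n : ℝ → ℝ := fun s => 2 * (inner ℝ (A (v s)) (v s) : ℝ) with hn_def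
  have hdn : ∀ s, HasDerivAt n (4 * ‖A (v s)‖ ^ 2) s := by
    intro s
    have hAv : HasDerivAt (fun r => A (v r)) (A (A (v s))) s :=
      (hasDerivAt_const s A).clm_apply (hd s) |>.congr_deriv (by simp)
    have h1 := (hAv.inner ℝ (hd s)).const_mul 2
    have he : 2 * ((inner ℝ (A (v s)) (A (v s)) : ℝ) + inner ℝ (A (A (v s))) (v s))
        = 4 * ‖A (v s)‖ ^ 2 := by
      have hsym : (inner ℝ (A (A (v s))) (v s) : ℝ) = inner ℝ (A (v s)) (A (v s)) :=
        hA.isSymmetric (A (v s)) (v s)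
      rw [hsym, real_inner_self_eq_norm_sq]; ring
    rwa [he] at h1
  set φ : ℝ → ℝ := fun s => Real.log (g s) with hφ_def
  have hdφ : ∀ s, HasDerivAt φ (n s / g s) s := by
    intro s
    have := (hdg s).log (hgpos s).ne'
    simpa [hn_def] using this
  have hderivφ : deriv φ = fun s => n s / g s := funext fun s => (hdφ s).deriv
  have hdψ : ∀ s, HasDerivAt (fun r => n r / g r)
      ((4 * ‖A (v s)‖ ^ 2 * g s - n s * (2 * inner ℝ (A (v s)) (v s))) / g s ^ 2) s :=
    fun s => (hdn s).div (hdg s) (hgpos s).ne'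
  have hconv : ConvexOn ℝ Set.univ φ := by
    apply convexOn_univ_of_deriv2_nonneg
    · exact fun s => (hdφ s).differentiableAt
    · rw [hderivφ]; exact fun s => (hdψ s).differentiableAt
    · intro s
      have h2 : deriv (deriv φ) s
          = (4 * ‖A (v s)‖ ^ 2 * g s - n s * (2 * inner ℝ (A (v s)) (v s))) / g s ^ 2 := by
        rw [hderivφ]; exact (hdψ s).deriv
      show 0 ≤ deriv^[2] φ s
      rw [Function.iterate_succ, Function.iterate_one, Function.comp_apply, h2]
      apply div_nonneg _ (sq_nonneg _)
      have hcs : (inner ℝ (A (v s)) (v s) : ℝ) ^ 2 ≤ ‖A (v s)‖ ^ 2 * ‖v s‖ ^ 2 := by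
        have := abs_real_inner_le_norm (A (v s)) (v s)
        calc (inner ℝ (A (v s)) (v s) : ℝ) ^ 2 = |(inner ℝ (A (v s)) (v s) : ℝ)| ^ 2 := (sq_abs _).symm
          _ ≤ (‖A (v s)‖ * ‖v s‖) ^ 2 := by
              apply pow_le_pow_left₀ (abs_nonneg _) this
          _ = ‖A (v s)‖ ^ 2 * ‖v s‖ ^ 2 := by ring
      have : n s * (2 * inner ℝ (A (v s)) (v s)) = 4 * (inner ℝ (A (v s)) (v s) : ℝ) ^ 2 := by
        rw [hn_def]; ring
      rw [this, hgnorm]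
      nlinarith [hcs]
  -- apply convexity at 0, θ
  have hkey : φ t ≤ a * φ 0 + b * φ θ := by
    have := hconv.2 (Set.mem_univ 0) (Set.mem_univ θ) ha0 hb0 hab
    have ht_eq : a • (0 : ℝ) + b • θ = t := by
      simp [smul_eq_mul, hb_def]
      field_simp
    rwa [ht_eq] at this
  -- convert to norms
  have hlog : Real.log (‖v t‖) ≤ a * Real.log ‖v 0‖ + b * Real.log ‖v θ‖ := by
    have h2 : ∀ s, φ s = 2 * Real.log ‖v s‖ := by
      intro s
      rw [hφ_def]; simp only [hgnorm]
      rw [Real.log_pow]; push_cast; ring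
    rw [h2, h2, h2] at hkey
    linarith
  have hut : u t = v t := hu t
  have huθ : u θ = v θ := hu θ
  rw [hut, huθ]
  have hRHS : ‖v 0‖ ^ a * ‖v θ‖ ^ b ≤ M ^ a * ‖v θ‖ ^ b := by
    apply mul_le_mul_of_nonneg_right _ (Real.rpow_nonneg (norm_nonneg _) _)
    exact Real.rpow_le_rpow (norm_nonneg _) (hv0 ▸ hu₀) ha0
  refine le_trans ?_ hRHS
  have hMa : 0 < M ^ a := Real.rpow_pos_of_pos hM a
  have hvθb : 0 < ‖v θ‖ ^ b := Real.rpow_pos_of_pos (hvpos θ) b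
  have hv0a : 0 < ‖v 0‖ ^ a := Real.rpow_pos_of_pos (hvpos 0) a
  rw [← Real.log_le_log_iff (hvpos t) (mul_pos hv0a hvθb)]
  rw [Real.log_mul hv0a.ne' hvθb.ne', Real.log_rpow (hvpos 0),
    Real.log_rpow (hvpos θ)]
  exact hlog
end

section
/- For B = [[−1, 2], [0, −1]], the matrix Q_∞ = ∫_0^∞ e^{sB} e^{sB*} ds satisfies 2‖(1/2)I₂ + Q_∞ B*‖ = 1 (operator norm), so the spectral angle arctan of this quantity equals π/4. -/
open Matrix MeasureTheory Set

section AuxLemmas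

open scoped Matrix.Norms.L2Operator

lemma exp_sq_zero {𝔸 : Type*} [NormedRing 𝔸] [NormedAlgebra ℝ 𝔸] [CompleteSpace 𝔸]
    {N : 𝔸} (h : N * N = 0) : NormedSpace.exp N = 1 + N := by
  rw [NormedSpace.exp_eq_tsum ℝ]
  have hzero : ∀ n ∉ ({0, 1} : Finset ℕ), ((n.factorial : ℝ)⁻¹) • N ^ n = 0 := by
    intro n hn
    simp only [Finset.mem_insert, Finset.mem_singleton] at hn
    have h2 : 2 ≤ n := by omega
    have hN : N ^ n = 0 := by
      have : N ^ n = N ^ 2 * N ^ (n - 2) := by rw [← pow_add]; congr 1; omega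
      rw [this, pow_two, h, zero_mul]
    simp [hN]
  show ∑' (n : ℕ), ((n.factorial : ℝ)⁻¹) • N ^ n = 1 + N
  rw [tsum_eq_sum hzero]
  norm_num

lemma exp_smul_B (s : ℝ) :
    NormedSpace.exp (s • (!![-1, 2; 0, -1] : Matrix (Fin 2) (Fin 2) ℝ)) =
      Real.exp (-s) • !![1, 2*s; 0, 1] := by
  have hsplit : s • (!![-1, 2; 0, -1] : Matrix (Fin 2) (Fin 2) ℝ)
      = (-s) • (1 : Matrix (Fin 2) (Fin 2) ℝ) + s • !![0, 2; 0, 0] := by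
    ext i j
    fin_cases i <;> fin_cases j <;>
      simp [Matrix.one_apply] <;> ring
  have hcomm : Commute ((-s) • (1 : Matrix (Fin 2) (Fin 2) ℝ)) (s • !![0, 2; 0, 0]) :=
    ((Commute.one_left _).smul_left _).smul_right _
  have h1 : NormedSpace.exp ((-s) • (1 : Matrix (Fin 2) (Fin 2) ℝ))
      = Real.exp (-s) • (1 : Matrix (Fin 2) (Fin 2) ℝ) := by
    have := NormedSpace.algebraMap_exp_comm (𝕂 := ℝ) (𝔸 := Matrix (Fin 2) (Fin 2) ℝ) (-s)
    rw [Real.exp_eq_exp_ℝ]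
    simpa [Algebra.algebraMap_eq_smul_one] using this.symm
  have h2 : NormedSpace.exp (s • (!![0, 2; 0, 0] : Matrix (Fin 2) (Fin 2) ℝ))
      = 1 + s • !![0, 2; 0, 0] := by
    apply exp_sq_zero
    ext i j
    fin_cases i <;> fin_cases j <;> simp [Matrix.mul_apply, Fin.sum_univ_two]
  rw [hsplit, Matrix.exp_add_of_commute _ _ hcomm, h1, h2]
  ext i j
  fin_cases i <;> fin_cases j <;>
    simp [Matrix.mul_apply, Fin.sum_univ_two, Matrix.one_apply] <;> ring

lemma integral_pow_mul_exp (n : ℕ) :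
    ∫ t in Ioi (0:ℝ), t ^ n * Real.exp (-(2*t)) = n.factorial / 2 ^ (n+1) := by
  have h := Real.integral_rpow_mul_exp_neg_mul_Ioi (a := (n:ℝ)+1) (r := 2) (by positivity) two_pos
  rw [Real.Gamma_nat_eq_factorial n] at h
  have hc : ∀ t ∈ Ioi (0:ℝ), t ^ ((n:ℝ) + 1 - 1) * Real.exp (-(2*t)) = t ^ n * Real.exp (-(2*t)) := by
    intro t ht
    rw [show (n:ℝ) + 1 - 1 = (n:ℝ) by ring, Real.rpow_natCast]
  rw [setIntegral_congr_fun measurableSet_Ioi hc] at h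
  rw [h, show ((n:ℝ)+1) = ((n+1 : ℕ) : ℝ) by push_cast; ring, Real.rpow_natCast]
  rw [div_pow, one_pow]
  ring

lemma integrable_pow_mul_exp (n : ℕ) :
    IntegrableOn (fun t : ℝ => t ^ n * Real.exp (-(2*t))) (Ioi 0) := by
  have h := integrableOn_rpow_mul_exp_neg_mul_rpow (p := 1) (s := (n:ℝ)) (b := 2)
    (lt_of_lt_of_le neg_one_lt_zero (Nat.cast_nonneg n)) one_pos two_pos
  apply h.congr_fun ?_ measurableSet_Ioi
  intro t ht
  simp [Real.rpow_natCast, neg_mul]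

lemma norm_M : ‖Matrix.toEuclideanCLM (𝕜 := ℝ) !![0, -(1/2 : ℝ); 1/2, 0]‖ = 1/2 := by
  set A : Matrix (Fin 2) (Fin 2) ℝ := !![0, -(1/2 : ℝ); 1/2, 0] with hA
  set L := Matrix.toEuclideanCLM (𝕜 := ℝ) A with hL
  have key : ∀ x : EuclideanSpace ℝ (Fin 2), ‖L x‖ = (1/2) * ‖x‖ := by
    intro x
    have hx : L x = (WithLp.equiv 2 _).symm (A.mulVec (WithLp.equiv 2 _ x)) := rfl
    rw [hx, EuclideanSpace.norm_eq, EuclideanSpace.norm_eq]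
    have h0 : A.mulVec (WithLp.equiv 2 _ x) 0 = -(1/2) * x 1 := by
      simp [hA, Matrix.mulVec, dotProduct, Fin.sum_univ_two]
    have h1 : A.mulVec (WithLp.equiv 2 _ x) 1 = (1/2) * x 0 := by
      simp [hA, Matrix.mulVec, dotProduct, Fin.sum_univ_two]
    simp only [Fin.sum_univ_two, WithLp.equiv_symm_apply, PiLp.toLp_apply, h0, h1, Real.norm_eq_abs]
    rw [show |(-(1/2) * x 1)| ^ 2 + |(1/2) * x 0| ^ 2
        = (1/2)^2 * (|x 0| ^ 2 + |x 1| ^ 2) by rw [abs_mul, abs_mul]; simp [mul_pow]; ring]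
    rw [Real.sqrt_mul (by positivity), Real.sqrt_sq (by norm_num)]
  apply le_antisymm
  · exact L.opNorm_le_bound (by norm_num) (fun x => le_of_eq (key x))
  · have hv : ‖(EuclideanSpace.single 0 (1:ℝ) : EuclideanSpace ℝ (Fin 2))‖ = 1 := by
      simp [EuclideanSpace.norm_single]
    have := L.le_opNorm (EuclideanSpace.single 0 (1:ℝ))
    rw [key, hv] at this
    linarith

end AuxLemmas

/-- `Q_∞ = ∫_0^∞ e^{sB} e^{sB^*} ds`, defined entrywise. -/
noncomputable def Qinf (B : Matrix (Fin 2) (Fin 2) ℝ) : Matrix (Fin 2) (Fin 2) ℝ :=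
  Matrix.of fun i j =>
    ∫ s in Set.Ioi (0:ℝ), (NormedSpace.exp (s • B) * (NormedSpace.exp (s • B))ᵀ) i j

lemma Qinf_eval : Qinf !![-1, 2; 0, -1] = !![3/2, 1/2; 1/2, 1/2] := by
  have hprod : ∀ s : ℝ,
      (NormedSpace.exp (s • (!![-1, 2; 0, -1] : Matrix (Fin 2) (Fin 2) ℝ)) *
        (NormedSpace.exp (s • (!![-1, 2; 0, -1] : Matrix (Fin 2) (Fin 2) ℝ)))ᵀ)
      = !![(1 + 4*s^2) * Real.exp (-(2*s)), 2*s * Real.exp (-(2*s));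
           2*s * Real.exp (-(2*s)), Real.exp (-(2*s))] := by
    intro s
    have he : Real.exp (-s) * Real.exp (-s) = Real.exp (-(2*s)) := by
      rw [← Real.exp_add]; ring_nf
    have hT : (!![1, 2*s; 0, 1] : Matrix (Fin 2) (Fin 2) ℝ)ᵀ = !![1, 0; 2*s, 1] := by
      ext i j; fin_cases i <;> fin_cases j <;> simp
    rw [exp_smul_B, Matrix.transpose_smul, hT]
    ext i j
    fin_cases i <;> fin_cases j <;>
      simp [Matrix.mul_apply, Fin.sum_univ_two] <;> (try rw [← he]) <;> (try ring)
  ext i j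
  rw [Qinf]
  simp only [Matrix.of_apply, hprod]
  have h0 := integral_pow_mul_exp 0
  have h1 := integral_pow_mul_exp 1
  have h2 := integral_pow_mul_exp 2
  norm_num [Nat.factorial] at h0 h1 h2
  fin_cases i <;> fin_cases j <;> simp only [Fin.zero_eta, Fin.mk_one, Fin.isValue,
    Matrix.cons_val', Matrix.cons_val_zero, Matrix.cons_val_one, Matrix.head_cons,
    Matrix.head_fin_const, Matrix.empty_val', Matrix.cons_val_fin_one]
  · have hfun : ∀ s : ℝ, (1 + 4*s^2) * Real.exp (-(2*s))
        = s^0 * Real.exp (-(2*s)) + 4 * (s^2 * Real.exp (-(2*s))) := by intro s; ring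
    simp_rw [hfun]
    rw [integral_add (integrable_pow_mul_exp 0) ((integrable_pow_mul_exp 2).const_mul 4),
      MeasureTheory.integral_const_mul _ _]
    simp only [pow_zero, one_mul]
    rw [h0, h2]; norm_num
  · have hfun : ∀ s : ℝ, 2*s * Real.exp (-(2*s)) = 2 * (s^1 * Real.exp (-(2*s))) := by
      intro s; ring
    simp_rw [hfun, pow_one]
    rw [MeasureTheory.integral_const_mul _ _, h1]; norm_num
  · have hfun : ∀ s : ℝ, 2*s * Real.exp (-(2*s)) = 2 * (s^1 * Real.exp (-(2*s))) := by
      intro s; ring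
    simp_rw [hfun, pow_one]
    rw [MeasureTheory.integral_const_mul _ _, h1]; norm_num
  · exact h0

/-- For `B = [[-1, 2], [0, -1]]`, `2‖(1/2)I₂ + Q_∞ Bᵀ‖ = 1` in the operator norm induced
by the Euclidean norm on `ℝ²`, so the spectral angle `arctan` of this quantity is `π/4`. -/
theorem example_spectral_angle :
    let B : Matrix (Fin 2) (Fin 2) ℝ := !![-1, 2; 0, -1]
    let M : Matrix (Fin 2) (Fin 2) ℝ := (1 / 2 : ℝ) • (1 : Matrix (Fin 2) (Fin 2) ℝ) +
      Qinf B * Bᵀ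
    2 * ‖Matrix.toEuclideanCLM (𝕜 := ℝ) M‖ = 1 ∧
      Real.arctan (2 * ‖Matrix.toEuclideanCLM (𝕜 := ℝ) M‖) = Real.pi / 4 := by
  intro B M
  have hM : M = !![0, -(1/2 : ℝ); 1/2, 0] := by
    show (1 / 2 : ℝ) • (1 : Matrix (Fin 2) (Fin 2) ℝ) + Qinf B * Bᵀ = _
    have hBT : Bᵀ = !![-1, 0; 2, -1] := by
      ext i j; fin_cases i <;> fin_cases j <;> simp [B, Matrix.transpose_apply]
    rw [show Qinf B = !![3/2, 1/2; 1/2, 1/2] from Qinf_eval, hBT]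
    ext i j
    fin_cases i <;> fin_cases j <;>
      simp [Matrix.mul_apply, Fin.sum_univ_two, Matrix.one_apply, B] <;> norm_num
  have h2 : 2 * ‖Matrix.toEuclideanCLM (𝕜 := ℝ) M‖ = 1 := by
    rw [hM, norm_M]; norm_num
  exact ⟨h2, by rw [h2]; exact Real.arctan_one⟩
end

section
/- Let θ > 0, φ > 0, c > 0 and σ > 0, and define r(x) = [(Γ(1/φ) − Γ(1/φ, −c log(σx))) / (−c log(σx))^{1/φ}] · [(−c log x)^{1/φ} / (Γ(1/φ) − Γ(1/φ, −c log x))] for 0 < x < min(1, 1/σ). Then r is monotone: non-decreasing if σ > 1 and non-increasing if σ < 1. -/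
open Real MeasureTheory Set

/-- The upper incomplete Gamma function `Γ(a,x) = ∫_x^∞ s^(a-1) e^(-s) ds`. -/
noncomputable def upperGamma (a x : ℝ) : ℝ :=
  ∫ s in Set.Ioi x, s ^ (a - 1) * Real.exp (-s)

/-- Auxiliary function `G a y = ∫_0^1 u^(a-1) e^(-y u) du`. -/
noncomputable def Gaux (a y : ℝ) : ℝ :=
  ∫ u in Set.Ioc (0 : ℝ) 1, u ^ (a - 1) * Real.exp (-(y * u))

lemma Gaux_integrableOn {a : ℝ} (ha : 0 < a) (y : ℝ) :
    IntegrableOn (fun u : ℝ => u ^ (a - 1) * Real.exp (-(y * u))) (Set.Ioc 0 1) volume := by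
  have h1 : IntervalIntegrable (fun u : ℝ => u ^ (a - 1)) volume 0 1 :=
    intervalIntegral.intervalIntegrable_rpow' (by linarith)
  have h2 : IntervalIntegrable (fun u : ℝ => u ^ (a - 1) * Real.exp (-(y * u))) volume 0 1 :=
    h1.mul_continuousOn (Continuous.continuousOn (by continuity))
  rwa [intervalIntegrable_iff_integrableOn_Ioc_of_le zero_le_one] at h2

lemma Gaux_pos {a : ℝ} (ha : 0 < a) (y : ℝ) : 0 < Gaux a y := by
  rw [Gaux, ← intervalIntegral.integral_of_le zero_le_one]
  refine intervalIntegral.intervalIntegral_pos_of_pos_on ?_ ?_ zero_lt_one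
  · rw [intervalIntegrable_iff_integrableOn_Ioc_of_le zero_le_one]
    exact Gaux_integrableOn ha y
  · intro x hx
    have hx0 : 0 < x := hx.1
    positivity

/-- Hölder's inequality: log-convexity of `Gaux a`. -/
lemma Gaux_holder {a : ℝ} (ha : 0 < a) (y z l : ℝ) (hl : 0 < l) (hl1 : l < 1) :
    Gaux a (l * y + (1 - l) * z) ≤ Gaux a y ^ l * Gaux a z ^ (1 - l) := by
  set μ := volume.restrict (Set.Ioc (0 : ℝ) 1) with hμ
  set base : ℝ → ℝ → ℝ := fun w u => u ^ (a - 1) * Real.exp (-(w * u)) with hbase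
  have hbase_nonneg : ∀ w : ℝ, ∀ u ∈ Set.Ioc (0 : ℝ) 1, 0 ≤ base w u := by
    intro w u hu
    have := hu.1
    positivity
  have hbase_cont : ∀ w : ℝ, ContinuousOn (base w) (Set.Ioc 0 1) := by
    intro w
    refine ContinuousOn.mul (fun x hx => ?_) (Continuous.continuousOn (by continuity))
    exact (Real.continuousAt_rpow_const x (a - 1) (Or.inl hx.1.ne')).continuousWithinAt
  have e : Real.HolderConjugate (1 / l) (1 / (1 - l)) :=
    Real.holderConjugate_one_div hl (by linarith) (by ring)
  have posf : ∀ c w : ℝ, 0 ≤ᵐ[μ] fun u => base w u ^ c := by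
    intro c w
    refine (ae_restrict_iff' measurableSet_Ioc).mpr (ae_of_all _ fun u hu => ?_)
    exact Real.rpow_nonneg (hbase_nonneg w u hu) c
  have memLp : ∀ (c w : ℝ), 0 < c → c < 1 →
      MemLp (fun u => base w u ^ c) (ENNReal.ofReal (1 / c)) μ := by
    intro c w hc hc1
    have A : ENNReal.ofReal (1 / c) ≠ 0 := by
      rw [Ne, ENNReal.ofReal_eq_zero, not_le]
      positivity
    have B : ENNReal.ofReal (1 / c) ≠ ⊤ := ENNReal.ofReal_ne_top
    have hmeas : AEStronglyMeasurable (fun u => base w u ^ c) μ := by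
      refine ContinuousOn.aestronglyMeasurable ?_ measurableSet_Ioc
      exact (hbase_cont w).rpow_const fun x hx => Or.inr hc.le
    rw [← memLp_norm_rpow_iff hmeas A B, ENNReal.toReal_ofReal (by positivity),
      ENNReal.div_self A B, memLp_one_iff_integrable]
    apply (Gaux_integrableOn ha w).congr
    refine Filter.eventuallyEq_of_mem (self_mem_ae_restrict measurableSet_Ioc) fun u hu => ?_
    have h0 : 0 ≤ base w u := hbase_nonneg w u hu
    have h1 : 0 ≤ base w u ^ c := Real.rpow_nonneg h0 c
    rw [Real.norm_of_nonneg h1, ← Real.rpow_mul h0, mul_one_div_cancel hc.ne', Real.rpow_one]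
  have key := MeasureTheory.integral_mul_le_Lp_mul_Lq_of_nonneg e (posf l y) (posf (1 - l) z)
    (memLp l y hl hl1) (memLp (1 - l) z (by linarith) (by linarith))
  rw [one_div_one_div, one_div_one_div] at key
  have lhs_eq : ∫ u, base y u ^ l * base z u ^ (1 - l) ∂μ = Gaux a (l * y + (1 - l) * z) := by
    refine setIntegral_congr_fun measurableSet_Ioc fun u hu => ?_
    have hu0 : 0 < u := hu.1
    simp only [hbase]
    rw [Real.mul_rpow (Real.rpow_nonneg hu0.le _) (Real.exp_pos _).le,
      Real.mul_rpow (Real.rpow_nonneg hu0.le _) (Real.exp_pos _).le,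
      ← Real.rpow_mul hu0.le, ← Real.rpow_mul hu0.le,
      ← Real.exp_mul, ← Real.exp_mul]
    have hexp : (a - 1) * l + (a - 1) * (1 - l) = a - 1 := by ring
    calc u ^ ((a - 1) * l) * Real.exp (-(y * u) * l) *
          (u ^ ((a - 1) * (1 - l)) * Real.exp (-(z * u) * (1 - l)))
        = (u ^ ((a - 1) * l) * u ^ ((a - 1) * (1 - l))) *
          (Real.exp (-(y * u) * l) * Real.exp (-(z * u) * (1 - l))) := by ring
      _ = u ^ (a - 1) * Real.exp (-((l * y + (1 - l) * z) * u)) := by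
          rw [← Real.rpow_add hu0, hexp, ← Real.exp_add]
          congr 1
          ring
  have rhs1 : ∫ u, (base y u ^ l) ^ (1 / l) ∂μ = Gaux a y := by
    refine setIntegral_congr_fun measurableSet_Ioc fun u hu => ?_
    rw [← Real.rpow_mul (hbase_nonneg y u hu), mul_one_div_cancel hl.ne', Real.rpow_one]
  have rhs2 : ∫ u, (base z u ^ (1 - l)) ^ (1 / (1 - l)) ∂μ = Gaux a z := by
    refine setIntegral_congr_fun measurableSet_Ioc fun u hu => ?_
    rw [← Real.rpow_mul (hbase_nonneg z u hu), mul_one_div_cancel (by linarith : (1:ℝ) - l ≠ 0),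
      Real.rpow_one]
  rw [lhs_eq, rhs1, rhs2] at key
  exact key

/-- Two-point log-convexity inequality for `Gaux`. -/
lemma Gaux_two_point {a : ℝ} (ha : 0 < a) {p p' q q' : ℝ} (h1 : p ≤ p') (h2 : p' ≤ q)
    (h3 : p + q = p' + q') : Gaux a p' * Gaux a q' ≤ Gaux a p * Gaux a q := by
  rcases eq_or_lt_of_le h1 with rfl | h1'
  · have : q = q' := by linarith
    subst this; exact le_rfl
  rcases eq_or_lt_of_le h2 with rfl | h2'
  · have : q' = p := by linarith
    subst this
    rw [mul_comm]
  · have hpq : p < q := lt_trans h1' h2'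
    set l : ℝ := (q - p') / (q - p) with hl
    have hl0 : 0 < l := div_pos (by linarith) (by linarith)
    have hl1 : l < 1 := (div_lt_one (by linarith)).mpr (by linarith)
    have hne : q - p ≠ 0 := by linarith
    have e1 : l * p + (1 - l) * q = p' := by
      rw [hl]
      field_simp [hne]
      ring
    have e2 : (1 - l) * p + (1 - (1 - l)) * q = q' := by
      have hq' : q' = p + q - p' := by linarith
      rw [hq', hl]
      field_simp [hne]
      ring
    have H1 : Gaux a p' ≤ Gaux a p ^ l * Gaux a q ^ (1 - l) := by
      rw [← e1]; exact Gaux_holder ha p q l hl0 hl1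
    have H2 : Gaux a q' ≤ Gaux a p ^ (1 - l) * Gaux a q ^ (1 - (1 - l)) := by
      rw [← e2]; exact Gaux_holder ha p q (1 - l) (by linarith) (by linarith)
    have hGp := Gaux_pos ha p
    have hGq := Gaux_pos ha q
    calc Gaux a p' * Gaux a q'
        ≤ (Gaux a p ^ l * Gaux a q ^ (1 - l)) *
          (Gaux a p ^ (1 - l) * Gaux a q ^ (1 - (1 - l))) := by
          refine mul_le_mul H1 H2 (Gaux_pos ha q').le (by positivity)
      _ = (Gaux a p ^ l * Gaux a p ^ (1 - l)) * (Gaux a q ^ (1 - l) * Gaux a q ^ (1 - (1 - l))) := by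
          ring
      _ = Gaux a p * Gaux a q := by
          rw [← Real.rpow_add hGp, ← Real.rpow_add hGq]
          norm_num

/-- The lower incomplete Gamma function equals `y^a * Gaux a y`. -/
lemma lowerGamma_eq {a : ℝ} (ha : 0 < a) {y : ℝ} (hy : 0 < y) :
    Real.Gamma a - upperGamma a y = y ^ a * Gaux a y := by
  have hint : IntegrableOn (fun s : ℝ => s ^ (a - 1) * Real.exp (-s)) (Set.Ioi 0) volume := by
    refine (Real.GammaIntegral_convergent ha).congr_fun (fun x _ => mul_comm _ _) measurableSet_Ioi
  have hGamma : Real.Gamma a = ∫ s in Set.Ioi (0 : ℝ), s ^ (a - 1) * Real.exp (-s) := by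
    rw [Real.Gamma_eq_integral ha]
    exact setIntegral_congr_fun measurableSet_Ioi fun x _ => mul_comm _ _
  have hsplit : ∫ s in Set.Ioi (0 : ℝ), s ^ (a - 1) * Real.exp (-s) =
      (∫ s in Set.Ioc 0 y, s ^ (a - 1) * Real.exp (-s)) +
        ∫ s in Set.Ioi y, s ^ (a - 1) * Real.exp (-s) := by
    rw [← setIntegral_union (Set.Ioc_disjoint_Ioi le_rfl) measurableSet_Ioi
      (hint.mono_set fun x hx => hx.1) (hint.mono_set (Set.Ioi_subset_Ioi hy.le)),
      Set.Ioc_union_Ioi_eq_Ioi hy.le]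
  have hlow : Real.Gamma a - upperGamma a y =
      ∫ s in Set.Ioc (0 : ℝ) y, s ^ (a - 1) * Real.exp (-s) := by
    rw [hGamma, hsplit, upperGamma]; ring
  rw [hlow, ← intervalIntegral.integral_of_le hy.le]
  have hsub := intervalIntegral.integral_comp_mul_left
    (fun s : ℝ => s ^ (a - 1) * Real.exp (-s)) hy.ne' (a := 0) (b := 1)
  rw [mul_zero, mul_one] at hsub
  have hy' : (∫ s in (0:ℝ)..y, s ^ (a - 1) * Real.exp (-s)) =
      y * ∫ t in (0:ℝ)..1, (y * t) ^ (a - 1) * Real.exp (-(y * t)) := by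
    rw [hsub, smul_eq_mul, ← mul_assoc, mul_inv_cancel₀ hy.ne', one_mul]
  rw [hy']
  have hcongr : (∫ t in (0:ℝ)..1, (y * t) ^ (a - 1) * Real.exp (-(y * t))) =
      ∫ t in (0:ℝ)..1, y ^ (a - 1) * (t ^ (a - 1) * Real.exp (-(y * t))) := by
    refine intervalIntegral.integral_congr fun t ht => ?_
    rw [Set.uIcc_of_le zero_le_one] at ht
    rw [Real.mul_rpow hy.le ht.1]
    ring
  rw [hcongr, intervalIntegral.integral_const_mul,
    intervalIntegral.integral_of_le zero_le_one, ← mul_assoc]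
  have : y * y ^ (a - 1) = y ^ a := by
    rw [← Real.rpow_one_add' hy.le (by linarith : 1 + (a - 1) ≠ 0)]
    norm_num
  rw [this, Gaux]

/-- Monotonicity of
`r(x) = [(Γ(1/φ) - Γ(1/φ, -c log(σx))) / (-c log(σx))^{1/φ}] ·
        [(-c log x)^{1/φ} / (Γ(1/φ) - Γ(1/φ, -c log x))]`:
non-decreasing if `σ > 1`, non-increasing if `σ < 1`. -/
theorem r_monotone (θ φ c σ : ℝ) (hθ : 0 < θ) (hφ : 0 < φ) (hc : 0 < c) (hσ : 0 < σ) :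
    let r : ℝ → ℝ := fun x =>
      (Real.Gamma (1 / φ) - upperGamma (1 / φ) (-c * Real.log (σ * x))) /
          (-c * Real.log (σ * x)) ^ (1 / φ) *
        ((-c * Real.log x) ^ (1 / φ) /
          (Real.Gamma (1 / φ) - upperGamma (1 / φ) (-c * Real.log x)))
    (σ > 1 → MonotoneOn r (Set.Ioo 0 (min 1 (1 / σ)))) ∧
      (σ < 1 → AntitoneOn r (Set.Ioo 0 (min 1 (1 / σ)))) := by
  intro r
  set a : ℝ := 1 / φ with ha_def
  have ha : 0 < a := by positivity
  have hmem : ∀ x ∈ Set.Ioo (0:ℝ) (min 1 (1 / σ)),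
      0 < -c * Real.log (σ * x) ∧ 0 < -c * Real.log x := by
    intro x hx
    have hx0 : 0 < x := hx.1
    have hx1 : x < 1 := lt_of_lt_of_le hx.2 (min_le_left _ _)
    have hxσ : x < 1 / σ := lt_of_lt_of_le hx.2 (min_le_right _ _)
    have hσx1 : σ * x < 1 := by
      have := (lt_div_iff₀ hσ).mp hxσ
      linarith [this]
    have hl1 : Real.log (σ * x) < 0 := Real.log_neg (by positivity) hσx1
    have hl2 : Real.log x < 0 := Real.log_neg hx0 hx1
    constructor <;> nlinarith
  have hr : ∀ x ∈ Set.Ioo (0:ℝ) (min 1 (1 / σ)),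
      r x = Gaux a (-c * Real.log (σ * x)) / Gaux a (-c * Real.log x) := by
    intro x hx
    obtain ⟨h1, h2⟩ := hmem x hx
    show (Real.Gamma a - upperGamma a (-c * Real.log (σ * x))) / (-c * Real.log (σ * x)) ^ a *
        ((-c * Real.log x) ^ a / (Real.Gamma a - upperGamma a (-c * Real.log x))) = _
    rw [lowerGamma_eq ha h1, lowerGamma_eq ha h2]
    have e1 : (-c * Real.log (σ * x)) ^ a ≠ 0 := (Real.rpow_pos_of_pos h1 a).ne'
    have e2 : (-c * Real.log x) ^ a ≠ 0 := (Real.rpow_pos_of_pos h2 a).ne'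
    have g2 : Gaux a (-c * Real.log x) ≠ 0 := (Gaux_pos ha _).ne'
    have haux : ∀ (X Y G1 G2 : ℝ), X ≠ 0 → Y ≠ 0 → G2 ≠ 0 →
        X * G1 / X * (Y / (Y * G2)) = G1 / G2 := by
      intro X Y G1 G2 hX hY hG2
      field_simp [hX, hY, hG2]
    exact haux _ _ _ _ e1 e2 g2
  constructor
  · intro hσ1 x₁ hx₁ x₂ hx₂ h12
    rw [hr x₁ hx₁, hr x₂ hx₂]
    obtain ⟨h11, h12'⟩ := hmem x₁ hx₁
    obtain ⟨h21, h22⟩ := hmem x₂ hx₂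
    rw [div_le_div_iff₀ (Gaux_pos ha _) (Gaux_pos ha _)]
    have hd : -c * Real.log σ < 0 := by
      have := Real.log_pos hσ1
      nlinarith
    have hB : -c * Real.log x₂ ≤ -c * Real.log x₁ := by
      have := Real.log_le_log hx₁.1 h12
      nlinarith
    have e₁ : -c * Real.log (σ * x₁) = -c * Real.log x₁ + -c * Real.log σ := by
      rw [Real.log_mul hσ.ne' hx₁.1.ne']; ring
    have e₂ : -c * Real.log (σ * x₂) = -c * Real.log x₂ + -c * Real.log σ := by
      rw [Real.log_mul hσ.ne' hx₂.1.ne']; ring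
    rw [e₁, e₂]
    exact Gaux_two_point ha (by linarith) (by linarith)
      (by ring)
  · intro hσ1 x₁ hx₁ x₂ hx₂ h12
    rw [hr x₁ hx₁, hr x₂ hx₂]
    obtain ⟨h11, h12'⟩ := hmem x₁ hx₁
    obtain ⟨h21, h22⟩ := hmem x₂ hx₂
    rw [div_le_div_iff₀ (Gaux_pos ha _) (Gaux_pos ha _)]
    have hd : 0 < -c * Real.log σ := by
      have := Real.log_neg hσ hσ1
      nlinarith
    have hB : -c * Real.log x₂ ≤ -c * Real.log x₁ := by
      have := Real.log_le_log hx₁.1 h12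
      nlinarith
    have e₁ : -c * Real.log (σ * x₁) = -c * Real.log x₁ + -c * Real.log σ := by
      rw [Real.log_mul hσ.ne' hx₁.1.ne']; ring
    have e₂ : -c * Real.log (σ * x₂) = -c * Real.log x₂ + -c * Real.log σ := by
      rw [Real.log_mul hσ.ne' hx₂.1.ne']; ring
    rw [e₁, e₂]
    have key := Gaux_two_point ha (p := -c * Real.log x₂) (p' := -c * Real.log x₁)
      (q := -c * Real.log x₁ + -c * Real.log σ) (q' := -c * Real.log x₂ + -c * Real.log σ)
      hB (by linarith) (by ring)
    calc Gaux a (-c * Real.log x₂ + -c * Real.log σ) * Gaux a (-c * Real.log x₁)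
        = Gaux a (-c * Real.log x₁) * Gaux a (-c * Real.log x₂ + -c * Real.log σ) := by ring
      _ ≤ Gaux a (-c * Real.log x₂) * Gaux a (-c * Real.log x₁ + -c * Real.log σ) := key
      _ = Gaux a (-c * Real.log x₁ + -c * Real.log σ) * Gaux a (-c * Real.log x₂) := by ring
end
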